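/- Let 0 < D_m < D_n, N > 0, and let y satisfy 1 ≤ y ≤ e^(N/D_n). Then D_m·(y - 1) + (D_n - D_m)·e^(N/(D_n-D_m))·(y^(-D_m/(D_n-D_m)) - 1) ≤ 0. -/

import Mathlib

theorem stmt_12 (Dm Dn N y : ℝ) (hDm : 0 < Dm) (hDmn : Dm < Dn) (hN : 0 < N)
    (hy1 : 1 ≤ y) (hy2 : y ≤ Real.exp (N / Dn)) :
    Dm * (y - 1)
      + (Dn - Dm) * Real.exp (N / (Dn - Dm)) * (y ^ (-(Dm / (Dn - Dm))) - 1)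
      ≤ 0 := by
  have hDn : 0 < Dn := hDm.trans hDmn
  set d := Dn - Dm with hd
  have hd0 : 0 < d := by simp [hd]; linarith
  set a := Dm / d with ha
  have ha0 : 0 < a := div_pos hDm hd0
  set E := Real.exp (N / d) with hE
  have hE0 : 0 < E := Real.exp_pos _
  set g : ℝ → ℝ := fun x => Dm * x + d * E * x ^ (-a) with hg
  have key : g y ≤ g 1 := by
    have hanti : AntitoneOn g (Set.Icc 1 (Real.exp (N / Dn))) := by
      have hderiv : ∀ x ∈ interior (Set.Icc 1 (Real.exp (N / Dn))),
          HasDerivAt g (Dm + d * E * (-a * x ^ (-a - 1))) x := by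
        intro x hx
        rw [interior_Icc] at hx
        have hx0 : (0:ℝ) < x := lt_of_lt_of_le one_pos hx.1.le
        have h1 : HasDerivAt (fun x : ℝ => x ^ (-a)) (-a * x ^ (-a - 1)) x :=
          Real.hasDerivAt_rpow_const (Or.inl hx0.ne')
        have h2 := ((hasDerivAt_id x).const_mul Dm).add (h1.const_mul (d * E))
        simpa [hg, mul_comm, mul_assoc, mul_left_comm, Pi.add_def] using h2
      apply antitoneOn_of_deriv_nonpos (convex_Icc _ _)
      · apply ContinuousOn.add (Continuous.continuousOn (by continuity))
        apply ContinuousOn.mul continuousOn_const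
        exact ContinuousOn.rpow_const continuousOn_id
          (fun x hx => Or.inl (by rintro rfl; exact absurd hx.1 (by norm_num)))
      · intro x hx
        exact (hderiv x hx).differentiableAt.differentiableWithinAt
      · intro x hx
        rw [(hderiv x hx).deriv]
        rw [interior_Icc] at hx
        have hx0 : (0:ℝ) < x := lt_of_lt_of_le one_pos hx.1.le
        -- show Dm + d*E*(-a * x^(-a-1)) ≤ 0, i.e. Dm ≤ d*a*E*x^(-a-1) = Dm*E*x^(-a-1)
        have hda : d * a = Dm := by rw [ha]; field_simp [hd0.ne']
        have hpow : x ^ (a + 1) ≤ E := by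
          have h1 : x ^ (a + 1) ≤ Real.exp (N / Dn) ^ (a + 1) :=
            Real.rpow_le_rpow hx0.le hx.2.le (by positivity)
          have h2 : Real.exp (N / Dn) ^ (a + 1) = E := by
            rw [Real.rpow_def_of_pos (Real.exp_pos _), Real.log_exp, hE]
            congr 1
            have : a + 1 = Dn / d := by
              rw [eq_div_iff hd0.ne', add_mul, one_mul, mul_comm a d, hda]; linarith
            rw [this]
            field_simp
          linarith [h1, h2.le, h2.ge]
        have hxp : (0:ℝ) < x ^ (a + 1) := Real.rpow_pos_of_pos hx0 _
        have hneg : x ^ (-a - 1) = (x ^ (a + 1))⁻¹ := by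
          rw [← Real.rpow_neg hx0.le]; ring_nf
        have h1 : (1:ℝ) ≤ E * x ^ (-a - 1) := by
          rw [hneg, ← div_eq_mul_inv, le_div_iff₀ hxp, one_mul]
          exact hpow
        nlinarith [mul_le_mul_of_nonneg_left h1 hDm.le]
    have h1mem : (1:ℝ) ∈ Set.Icc 1 (Real.exp (N / Dn)) :=
      ⟨le_refl 1, le_trans hy1 hy2⟩
    exact hanti h1mem ⟨hy1, hy2⟩ hy1
  have hg1 : g 1 = Dm + d * E := by simp [hg, Real.one_rpow]
  have hgy : g y = Dm * y + d * E * y ^ (-a) := rfl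
  have : Dm * y + d * E * y ^ (-a) ≤ Dm + d * E := by
    rw [← hgy, ← hg1]; exact key
  nlinarith [this]
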